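/- Asymptotic suppression of biased evaluators: fix γ > 0 and suppose that at every step s every biased evaluator's loss exceeds every truthful evaluator's loss by at least γ, i.e. l(s, m) ≥ l(s, m') + γ for all m ∈ B, m' ∈ G, and all s ∈ ℕ. Then the normalized aggregate biased weight tends to zero: (∑_{m∈B} w(t, m)) / (∑_{m∈M} w(t, m)) → 0 as t → ∞. -/
import Mathlib


/-- Multiplicative-weights trust weights: `w 0 m = 1/|M|` and
`w (t+1) m = w t m · exp(−η · l t m)`. -/
noncomputable def mwuWeight {M : Type*} [Fintype M] (η : ℝ) (l : ℕ → M → ℝ) :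
    ℕ → M → ℝ
  | 0 => fun _ => 1 / (Fintype.card M : ℝ)
  | t + 1 => fun m => mwuWeight η l t m * Real.exp (-η * l t m)

open Filter

lemma mwuWeight_eq {M : Type*} [Fintype M] (η : ℝ) (l : ℕ → M → ℝ) (t : ℕ) (m : M) :
    mwuWeight η l t m = (1 / (Fintype.card M : ℝ)) *
      Real.exp (-η * ∑ s ∈ Finset.range t, l s m) := by
  induction t with
  | zero => simp [mwuWeight]
  | succ t ih =>
    simp only [mwuWeight]
    rw [ih, Finset.sum_range_succ, mul_assoc, ← Real.exp_add]
    ring_nf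

lemma mwuWeight_pos {M : Type*} [Fintype M] [Nonempty M] (η : ℝ) (l : ℕ → M → ℝ)
    (t : ℕ) (m : M) : 0 < mwuWeight η l t m := by
  rw [mwuWeight_eq]
  have : (0:ℝ) < (Fintype.card M : ℝ) := by positivity
  positivity

/-- **Asymptotic suppression of biased evaluators.** Under a persistent per-step loss
gap `γ > 0`, the normalized aggregate biased weight tends to zero as `t → ∞`. -/
theorem mwu_asymptotic_suppression
    {M : Type*} [Fintype M] [DecidableEq M] [Nonempty M]
    (B G : Finset M) (hB : B.Nonempty) (hG : G.Nonempty)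
    (hdisj : Disjoint B G) (hunion : B ∪ G = Finset.univ)
    (η : ℝ) (hη : 0 < η) (l : ℕ → M → ℝ)
    (γ : ℝ) (hγ : 0 < γ)
    (hdom : ∀ s : ℕ, ∀ m ∈ B, ∀ m' ∈ G, l s m' + γ ≤ l s m) :
    Tendsto (fun t : ℕ => (∑ m ∈ B, mwuWeight η l t m) / (∑ m, mwuWeight η l t m))
      atTop (nhds 0) := by
  obtain ⟨g, hg⟩ := hG
  have hcard : (0:ℝ) < (Fintype.card M : ℝ) := by positivity
  -- upper bound function
  have hub : ∀ t : ℕ,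
      (∑ m ∈ B, mwuWeight η l t m) / (∑ m, mwuWeight η l t m)
        ≤ (B.card : ℝ) * Real.exp (-(η * γ) * t) := by
    intro t
    have hden : (0:ℝ) < ∑ m, mwuWeight η l t m :=
      Finset.sum_pos (fun m _ => mwuWeight_pos η l t m) ⟨g, Finset.mem_univ g⟩
    have hgden : mwuWeight η l t g ≤ ∑ m, mwuWeight η l t m :=
      Finset.single_le_sum (fun m _ => (mwuWeight_pos η l t m).le) (Finset.mem_univ g)
    have hnum : (∑ m ∈ B, mwuWeight η l t m)
        ≤ (B.card : ℝ) * (mwuWeight η l t g * Real.exp (-(η * γ) * t)) := by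
      have hbound : ∀ m ∈ B, mwuWeight η l t m
          ≤ mwuWeight η l t g * Real.exp (-(η * γ) * t) := by
        intro m hm
        rw [mwuWeight_eq, mwuWeight_eq, mul_assoc, ← Real.exp_add]
        apply mul_le_mul_of_nonneg_left _ (by positivity)
        apply Real.exp_le_exp.mpr
        have hsum : (∑ s ∈ Finset.range t, l s g) + γ * t
            ≤ ∑ s ∈ Finset.range t, l s m := by
          have := Finset.sum_le_sum (fun s (_ : s ∈ Finset.range t) => hdom s m hm g hg)
          simpa [Finset.sum_add_distrib, mul_comm] using this
        nlinarith [hsum]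
      calc (∑ m ∈ B, mwuWeight η l t m)
          ≤ ∑ _m ∈ B, mwuWeight η l t g * Real.exp (-(η * γ) * t) :=
            Finset.sum_le_sum hbound
        _ = (B.card : ℝ) * (mwuWeight η l t g * Real.exp (-(η * γ) * t)) := by
            rw [Finset.sum_const, nsmul_eq_mul]
    rw [div_le_iff₀ hden]
    calc (∑ m ∈ B, mwuWeight η l t m)
        ≤ (B.card : ℝ) * (mwuWeight η l t g * Real.exp (-(η * γ) * t)) := hnum
      _ ≤ (B.card : ℝ) * ((∑ m, mwuWeight η l t m) * Real.exp (-(η * γ) * t)) := by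
          apply mul_le_mul_of_nonneg_left _ (by positivity)
          exact mul_le_mul_of_nonneg_right hgden (Real.exp_pos _).le
      _ = (B.card : ℝ) * Real.exp (-(η * γ) * t) * (∑ m, mwuWeight η l t m) := by ring
  have hlb : ∀ t : ℕ, (0:ℝ) ≤
      (∑ m ∈ B, mwuWeight η l t m) / (∑ m, mwuWeight η l t m) := by
    intro t
    apply div_nonneg
    · exact Finset.sum_nonneg fun m _ => (mwuWeight_pos η l t m).le
    · exact Finset.sum_nonneg fun m _ => (mwuWeight_pos η l t m).le
  have hexp : Tendsto (fun t : ℕ => (B.card : ℝ) * Real.exp (-(η * γ) * t))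
      atTop (nhds 0) := by
    have h1 : Tendsto (fun t : ℕ => Real.exp (-(η * γ) * t)) atTop (nhds 0) := by
      have : Tendsto (fun t : ℕ => (-(η * γ)) * t) atTop atBot := by
        apply Tendsto.const_mul_atTop_of_neg (by nlinarith)
        exact tendsto_natCast_atTop_atTop
      exact Real.tendsto_exp_atBot.comp this
    simpa using h1.const_mul (B.card : ℝ)
  exact squeeze_zero hlb hub hexp
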